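/- arXiv:2307.06700 — 4 statements merged into one kernel-verified Lean document; each statement's English description precedes it below -/
import Mathlib

section
/- Let D be a digraph and let α be a k-dicolouring of D. Let G_α be the undirected graph on V(D) whose edges are the pairs {u,v} such that uv is an arc of D and α(u) ≠ α(v). Then every proper k-colouring of G_α is a k-dicolouring of D. -/
variable {V : Type*}

/-- A directed cycle in the digraph with arc relation `A`: a nonempty list of
pairwise distinct vertices forming a closed directed walk. -/
def IsDicycle (A : V → V → Prop) (l : List V) : Prop :=
  l ≠ [] ∧ l.Nodup ∧ l.Chain' A ∧ ∀ x ∈ l.getLast?, ∀ y ∈ l.head?, A x y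

/-- The digraph with arc relation `A` has no directed cycle. -/
def Acyclic (A : V → V → Prop) : Prop := ¬ ∃ l : List V, IsDicycle A l

/-- `S` intersects every directed cycle of `A` containing `v`. -/
def HitsCyclesThrough (A : V → V → Prop) (v : V) (S : Finset V) : Prop :=
  ∀ l : List V, IsDicycle A l → v ∈ l → ∃ u ∈ l, u ∈ S

/-- The cycle-degree of `v`: the minimum size of a set `S ⊆ V \ {v}`
intersecting every directed cycle containing `v`. -/
noncomputable def cycleDegree (A : V → V → Prop) (v : V) : ℕ :=
  sInf { n | ∃ S : Finset V, S.card = n ∧ v ∉ S ∧ HitsCyclesThrough A v S }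

/-- A dicolouring: every colour class induces an acyclic subdigraph. -/
def IsDicolouring {C : Type*} (A : V → V → Prop) (φ : V → C) : Prop :=
  ∀ c : C, Acyclic fun x y => A x y ∧ φ x = c ∧ φ y = c

/-- The dichromatic number: least `k` admitting a `k`-dicolouring. -/
noncomputable def dichromaticNumber (A : V → V → Prop) : ℕ :=
  sInf { k | ∃ φ : V → Fin k, IsDicolouring A φ }


private lemma const_of_chain {k : ℕ} {R : V → V → Prop} {f : V → Fin k}
    (hR : ∀ x y, R x y → f x = f y) :
    ∀ (l : List V) (a : V), List.Chain R a l → ∀ x ∈ a :: l, f x = f a := by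
  intro l
  induction l with
  | nil => intro a _ x hx; simp at hx; subst hx; rfl
  | cons b t ih =>
    intro a hch x hx
    rcases List.chain_cons.mp hch with ⟨hab, hbt⟩
    rcases List.mem_cons.mp hx with hx | hx
    · subst hx; rfl
    · rw [ih b hbt x hx, hR a b hab]

private lemma chain_strengthen {k : ℕ} {R : V → V → Prop} {f : V → Fin k} {c : Fin k} :
    ∀ (l : List V) (a : V), List.Chain R a l → (∀ x ∈ a :: l, f x = c) →
      List.Chain (fun x y => R x y ∧ f x = c ∧ f y = c) a l := by
  intro l
  induction l with
  | nil => intro a _ _; exact List.Chain.nil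
  | cons b t ih =>
    intro a hch hmem
    rcases List.chain_cons.mp hch with ⟨hab, hbt⟩
    exact List.Chain.cons ⟨hab, hmem a (by simp), hmem b (by simp)⟩
      (ih b hbt fun x hx => hmem x (List.mem_cons_of_mem a hx))

theorem stmt11 [Fintype V] [DecidableEq V] (A : V → V → Prop) (k : ℕ)
    (α : V → Fin k) (hα : IsDicolouring A α) (β : V → Fin k)
    (hβ : ∀ x y, A x y → α x ≠ α y → β x ≠ β y) :
    IsDicolouring A β := by
  intro c ⟨l, hne, hnd, hch, hlast⟩
  obtain ⟨a, l', rfl⟩ := List.exists_cons_of_ne_nil hne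
  have hch' : List.Chain (fun x y => A x y ∧ β x = c ∧ β y = c) a l' := hch
  have hαeq : ∀ x y, (A x y ∧ β x = c ∧ β y = c) → α x = α y := by
    intro x y ⟨hxy, hbx, hby⟩
    by_contra hne'
    exact hβ x y hxy hne' (hbx.trans hby.symm)
  have hmem : ∀ x ∈ a :: l', α x = α a := const_of_chain hαeq l' a hch'
  apply hα (α a)
  refine ⟨a :: l', List.cons_ne_nil a l', hnd, ?_, ?_⟩
  · exact List.IsChain.imp (fun ⦃x y⦄ (h : _ ∧ _ ∧ _) => ⟨h.1.1, h.2.1, h.2.2⟩)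
      (chain_strengthen (R := fun x y => A x y ∧ β x = c ∧ β y = c) l' a hch' hmem)
  · intro x hx y hy
    have hA := hlast x hx y hy
    have hxm : x ∈ a :: l' := List.mem_of_mem_getLast? hx
    have hym : y ∈ a :: l' := List.mem_of_mem_head? hy
    exact ⟨hA.1, hmem x hxm, hmem y hym⟩
end

section
/- Let G be a family of undirected graphs closed under edge-deletion with χ(G) ≤ k for every G ∈ G, and suppose that for every n-vertex G ∈ G the diameter of the k-colouring graph C_k(G) is at most f(n). Then for every n-vertex digraph D with UG(D) ∈ G, the diameter of the k-dicolouring graph D_k(D) is at most 2f(n). -/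
variable {V : Type*}

/-- One step in the `k`-dicolouring graph: both are dicolourings and they
differ on exactly one vertex. -/
def DicolStep (A : V → V → Prop) {k : ℕ} (α β : V → Fin k) : Prop :=
  IsDicolouring A α ∧ IsDicolouring A β ∧ ∃! v, α v ≠ β v

/-- `l` is (the list of successive colourings of) a redicolouring sequence from
`α` to `β`. -/
def RedicolPath (A : V → V → Prop) {k : ℕ} (α β : V → Fin k)
    (l : List (V → Fin k)) : Prop :=
  List.Chain (DicolStep A) α l ∧ (α :: l).getLast (List.cons_ne_nil _ _) = β

/-- The underlying undirected graph of the digraph `A`. -/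
def UG (A : V → V → Prop) : SimpleGraph V where
  Adj x y := x ≠ y ∧ (A x y ∨ A y x)
  symm := ⟨fun x y h => ⟨Ne.symm h.1, h.2.elim Or.inr Or.inl⟩⟩
  loopless := ⟨fun x h => h.1 rfl⟩

/-- A proper colouring of a simple graph. -/
def ProperCol {C : Type*} (G : SimpleGraph V) (φ : V → C) : Prop :=
  ∀ x y, G.Adj x y → φ x ≠ φ y

/-- One step in the `k`-colouring graph of `G`. -/
def RecolStep (G : SimpleGraph V) {k : ℕ} (α β : V → Fin k) : Prop :=
  ProperCol G α ∧ ProperCol G β ∧ ∃! v, α v ≠ β v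

/-- `l` is a recolouring sequence from `α` to `β` in `G`. -/
def RecolPath (G : SimpleGraph V) {k : ℕ} (α β : V → Fin k)
    (l : List (V → Fin k)) : Prop :=
  List.Chain (RecolStep G) α l ∧ (α :: l).getLast (List.cons_ne_nil _ _) = β


section Helpers

variable {X : Type*}

lemma reach_trans {P : X → X → Prop} :
    ∀ {a : X} (l1 : List X) {b c : X} (l2 : List X),
      List.Chain P a l1 → (a :: l1).getLast (List.cons_ne_nil _ _) = b →
      List.Chain P b l2 → (b :: l2).getLast (List.cons_ne_nil _ _) = c →
      ∃ l : List X, List.Chain P a l ∧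
        (a :: l).getLast (List.cons_ne_nil _ _) = c ∧
        l.length = l1.length + l2.length := by
  intro a l1
  induction l1 generalizing a with
  | nil =>
    intro b c l2 _ g1 c2 g2
    simp only [List.getLast_singleton] at g1
    subst g1
    exact ⟨l2, c2, g2, by simp⟩
  | cons x t ih =>
    intro b c l2 c1 g1 c2 g2
    rcases List.chain_cons.1 c1 with ⟨hax, hxt⟩
    have g1' : (x :: t).getLast (List.cons_ne_nil _ _) = b := by
      rw [← g1]; exact (List.getLast_cons (List.cons_ne_nil _ _)).symm
    obtain ⟨l, hl, hg, hlen⟩ := ih (a := x) l2 hxt g1' c2 g2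
    refine ⟨x :: l, List.chain_cons.2 ⟨hax, hl⟩, ?_, by simp [hlen]; omega⟩
    rw [List.getLast_cons (List.cons_ne_nil _ _)]; exact hg

lemma reach_symm {P : X → X → Prop} (hsymm : ∀ a b, P a b → P b a) :
    ∀ (l : List X) {a b : X},
      List.Chain P a l → (a :: l).getLast (List.cons_ne_nil _ _) = b →
      ∃ m : List X, List.Chain P b m ∧
        (b :: m).getLast (List.cons_ne_nil _ _) = a ∧
        m.length = l.length := by
  intro l
  induction l with
  | nil =>
    intro a b _ g
    simp only [List.getLast_singleton] at g
    subst g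
    exact ⟨[], List.Chain.nil, rfl, rfl⟩
  | cons x t ih =>
    intro a b c1 g1
    rcases List.chain_cons.1 c1 with ⟨hax, hxt⟩
    have g1' : (x :: t).getLast (List.cons_ne_nil _ _) = b := by
      rw [← g1]; exact (List.getLast_cons (List.cons_ne_nil _ _)).symm
    obtain ⟨m, hm, hg, hlen⟩ := ih hxt g1'
    have step : List.Chain P x [a] := List.chain_cons.2 ⟨hsymm _ _ hax, List.Chain.nil⟩
    obtain ⟨l', hl', hg', hlen'⟩ := reach_trans m [a] hm hg step rfl
    exact ⟨l', hl', hg', by simp [hlen', hlen]⟩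

lemma chain_const {C : Type*} {φ : X → C} {P : X → X → Prop}
    (hP : ∀ x y, P x y → φ x = φ y) :
    ∀ {a : X} {l : List X}, List.Chain P a l → ∀ x ∈ l, φ x = φ a := by
  intro a l h
  induction l generalizing a with
  | nil => intro x hx; simp at hx
  | cons b' l' ih =>
    intro x hx
    have hab : P a b' := (List.isChain_cons_cons.1 h).1
    have hrest : List.Chain P b' l' := (List.isChain_cons_cons.1 h).2
    rcases List.mem_cons.1 hx with rfl | hx
    · exact (hP _ _ hab).symm
    · exact (ih hrest x hx).trans (hP _ _ hab).symm

end Helpers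

/-- Delete the `φ`-monochromatic edges from `G`. -/
def monoDel (G : SimpleGraph V) {C : Type*} (φ : V → C) : SimpleGraph V where
  Adj x y := G.Adj x y ∧ φ x ≠ φ y
  symm := ⟨fun x y h => ⟨h.1.symm, Ne.symm h.2⟩⟩
  loopless := ⟨fun x h => G.loopless.irrefl x h.1⟩

lemma dicol_of_proper_monoDel {k : ℕ} (A : V → V → Prop) (φ : V → Fin k)
    (hφ : IsDicolouring A φ) (δ : V → Fin k)
    (hδ : ProperCol (monoDel (UG A) φ) δ) : IsDicolouring A δ := by
  have hloop : ∀ x, ¬ A x x := by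
    intro x hx
    apply hφ (φ x)
    exact ⟨[x], by simp [IsDicycle, hx, List.Chain']⟩
  intro c hc
  obtain ⟨l, hl⟩ := hc
  -- every arc of the δ-monochromatic subdigraph is φ-monochromatic
  have key : ∀ x y, (A x y ∧ δ x = c ∧ δ y = c) → A x y ∧ φ x = φ y := by
    intro x y ⟨hxy, h1, h2⟩
    refine ⟨hxy, ?_⟩
    by_contra hne
    have hxney : x ≠ y := fun h => hloop x (h ▸ hxy)
    have hadj : (monoDel (UG A) φ).Adj x y := And.intro (And.intro hxney (Or.inl hxy)) hne
    exact hδ x y hadj (h1.trans h2.symm)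
  obtain ⟨hne, hnd, hch, hlast⟩ := hl
  obtain ⟨a, t, rfl⟩ := List.exists_cons_of_ne_nil hne
  have hch' : List.Chain (fun x y => A x y ∧ δ x = c ∧ δ y = c) a t := hch
  have hchφ : List.Chain (fun x y => A x y ∧ φ x = φ y) a t :=
    List.IsChain.imp key hch'
  have hconst : ∀ x ∈ a :: t, φ x = φ a := by
    intro x hx
    rcases List.mem_cons.1 hx with rfl | hx
    · rfl
    · exact chain_const (fun x y h => h.2) hchφ x hx
  apply hφ (φ a)
  refine ⟨a :: t, List.cons_ne_nil _ _, hnd, ?_, ?_⟩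
  · -- chain for the φ-class relation
    show List.IsChain _ _
    rw [List.isChain_iff_getElem]
    intro i hi
    have hchφ' : List.Chain' (fun x y => A x y ∧ φ x = φ y) (a :: t) := hchφ
    have hg := (List.isChain_iff_getElem.1 hchφ') i hi
    exact ⟨hg.1, hconst _ (List.getElem_mem _), hconst _ (List.getElem_mem _)⟩
  · intro x hx y hy
    have hy' : a = y := by simpa using hy
    have := key x y (hlast x hx y hy)
    subst hy'
    exact ⟨this.1, this.2, rfl⟩

lemma dicolStep_symm (A : V → V → Prop) {k : ℕ} :
    ∀ a b : V → Fin k, DicolStep A a b → DicolStep A b a := by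
  rintro a b ⟨h1, h2, v, hv, hu⟩
  exact ⟨h2, h1, v, hv.symm, fun u hu' => hu u hu'.symm⟩

theorem stmt12 [Fintype V] [DecidableEq V] (𝒢 : Set (SimpleGraph V)) (k : ℕ)
    (f : ℕ → ℕ)
    (hclosed : ∀ G ∈ 𝒢, ∀ H : SimpleGraph V, H ≤ G → H ∈ 𝒢)
    (hchi : ∀ G ∈ 𝒢, ∃ φ : V → Fin k, ProperCol G φ)
    (hdiam : ∀ G ∈ 𝒢, ∀ α β : V → Fin k, ProperCol G α → ProperCol G β →
      ∃ l : List (V → Fin k), RecolPath G α β l ∧ l.length ≤ f (Fintype.card V))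
    (A : V → V → Prop) (hA : UG A ∈ 𝒢)
    (α β : V → Fin k) (hα : IsDicolouring A α) (hβ : IsDicolouring A β) :
    ∃ l : List (V → Fin k), RedicolPath A α β l ∧
      l.length ≤ 2 * f (Fintype.card V) := by
  classical
  -- the two edge-deleted graphs
  have hle : ∀ (φ : V → Fin k), monoDel (UG A) φ ≤ UG A := fun φ x y h => And.left h
  have hGα : monoDel (UG A) α ∈ 𝒢 := hclosed _ hA _ (hle α)
  have hGβ : monoDel (UG A) β ∈ 𝒢 := hclosed _ hA _ (hle β)
  obtain ⟨γ, hγ⟩ := hchi _ hA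
  have hγα : ProperCol (monoDel (UG A) α) γ := fun x y h => hγ x y (hle α h)
  have hγβ : ProperCol (monoDel (UG A) β) γ := fun x y h => hγ x y (hle β h)
  have hαα : ProperCol (monoDel (UG A) α) α := fun x y h => And.right h
  have hββ : ProperCol (monoDel (UG A) β) β := fun x y h => And.right h
  obtain ⟨l1, ⟨hc1, hg1⟩, hlen1⟩ := hdiam _ hGα α γ hαα hγα
  obtain ⟨l2, ⟨hc2, hg2⟩, hlen2⟩ := hdiam _ hGβ β γ hββ hγβ
  -- convert the recolouring chains to dicolouring chains
  have conv : ∀ (φ : V → Fin k), IsDicolouring A φ →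
      ∀ a b : V → Fin k, RecolStep (monoDel (UG A) φ) a b → DicolStep A a b := by
    rintro φ hφ a b ⟨h1, h2, hv⟩
    exact ⟨dicol_of_proper_monoDel A φ hφ a h1, dicol_of_proper_monoDel A φ hφ b h2, hv⟩
  have hc1' : List.Chain (DicolStep A) α l1 := List.IsChain.imp (conv α hα) hc1
  have hc2' : List.Chain (DicolStep A) β l2 := List.IsChain.imp (conv β hβ) hc2
  obtain ⟨m, hm, hgm, hlenm⟩ := reach_symm (dicolStep_symm A) l2 hc2' hg2
  obtain ⟨l, hl, hgl, hlenl⟩ := reach_trans l1 m hc1' hg1 hm hgm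
  exact ⟨l, ⟨hl, hgl⟩, by omega⟩
end

section
/- Every digraph D admits a valid 𝒟-decomposition of width dw(D), i.e., an optimal 𝒟-decomposition (T, X) such that |X_t \ X_{t'}| = |X_{t'} \ X_t| = 1 for every edge tt' of T. -/
variable {V : Type*}

/-- `D[S]` is strongly connected. -/
def StronglyConnectedOn (A : V → V → Prop) (S : Finset V) : Prop :=
  ∀ x ∈ S, ∀ y ∈ S, Relation.ReflTransGen (fun a b => A a b ∧ a ∈ S ∧ b ∈ S) x y

/-- Adjacency in the support of `S` in the decomposition `(T, X)`. -/
def SupportAdj {n : ℕ} (T : SimpleGraph (Fin n)) (X : Fin n → Finset V)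
    (S : Finset V) (t t' : Fin n) : Prop :=
  T.Adj t t' ∧ ∃ u ∈ S, u ∈ X t ∧ u ∈ X t'

/-- A 𝒟-decomposition of the digraph `A`: a tree `T` with bags `X` such that
for every `S` inducing a strongly connected subdigraph, the support of `S` is
a non-empty connected subgraph of `T`. -/
def IsDDecomp (A : V → V → Prop) {n : ℕ} (T : SimpleGraph (Fin n))
    (X : Fin n → Finset V) : Prop :=
  T.IsTree ∧ ∀ S : Finset V, S.Nonempty → StronglyConnectedOn A S →
    (∃ t, ∃ u ∈ S, u ∈ X t) ∧
    ∀ t t', (∃ u ∈ S, u ∈ X t) → (∃ u ∈ S, u ∈ X t') →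
      Relation.ReflTransGen (SupportAdj T X S) t t'

/-- The width of a 𝒟-decomposition: maximum bag size minus one. -/
def ddWidth {n : ℕ} (X : Fin n → Finset V) : ℕ :=
  (Finset.univ.sup fun t => (X t).card) - 1

/-- The 𝒟-width of the digraph `A`. -/
noncomputable def dWidth (A : V → V → Prop) : ℕ :=
  sInf { w | ∃ (n : ℕ) (T : SimpleGraph (Fin n)) (X : Fin n → Finset V),
    IsDDecomp A T X ∧ ddWidth X = w }


open Relation Finset SimpleGraph SimpleGraph.Walk

/-- A rooted tree structure given by a parent function with a height certificate. -/
structure PTree (ι : Type) where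
  r : ι
  p : ι → ι
  ht : ι → ℕ
  root_fix : p r = r
  ht_lt : ∀ t, t ≠ r → ht (p t) < ht t

namespace PTree

variable {ι : Type} [DecidableEq ι]

/-- The undirected graph of a parent structure. -/
def G (P : PTree ι) : SimpleGraph ι where
  Adj a b := a ≠ b ∧ (P.p a = b ∨ P.p b = a)
  symm := ⟨fun _ _ h => ⟨h.1.symm, h.2.symm⟩⟩
  loopless := ⟨fun _ h => h.1 rfl⟩

omit [DecidableEq ι] in
lemma adj_iff (P : PTree ι) {a b : ι} :
    P.G.Adj a b ↔ a ≠ b ∧ (P.p a = b ∨ P.p b = a) := Iff.rfl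

omit [DecidableEq ι] in
lemma p_ne (P : PTree ι) {t : ι} (h : t ≠ P.r) : P.p t ≠ t :=
  fun hc => absurd (P.ht_lt t h) (by rw [hc]; exact lt_irrefl _)

omit [DecidableEq ι] in
lemma adj_parent (P : PTree ι) {t : ι} (h : t ≠ P.r) : P.G.Adj t (P.p t) :=
  ⟨(P.p_ne h).symm, Or.inl rfl⟩

omit [DecidableEq ι] in
lemma reach_root (P : PTree ι) (t : ι) : P.G.Reachable t P.r := by
  have key : ∀ n t, P.ht t < n → P.G.Reachable t P.r := by
    intro n
    induction n with
    | zero => intro t h; exact absurd h (Nat.not_lt_zero _)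
    | succ n ih =>
      intro t h
      by_cases htr : t = P.r
      · subst htr; rfl
      · exact ((P.adj_parent htr).reachable).trans
          (ih (P.p t) (lt_of_lt_of_le (P.ht_lt t htr) (Nat.lt_succ_iff.mp h)))
  exact key (P.ht t + 1) t (Nat.lt_succ_self _)

omit [DecidableEq ι] in
lemma connected (P : PTree ι) : P.G.Connected := by
  have : Nonempty ι := ⟨P.r⟩
  exact ⟨fun a b => (P.reach_root a).trans (P.reach_root b).symm⟩

lemma acyclic (P : PTree ι) : P.G.IsAcyclic := by
  intro v c hc
  obtain ⟨a, ha, hmax⟩ : ∃ a ∈ c.support.toFinset,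
      ∀ x ∈ c.support.toFinset, P.ht x ≤ P.ht a :=
    Finset.exists_max_image _ P.ht ⟨v, by simp⟩
  rw [List.mem_toFinset] at ha
  set d : P.G.Walk a a := c.rotate a ha with hd_def
  have hd : d.IsCycle := hc.rotate ha
  have hdsup : ∀ x ∈ d.support, P.ht x ≤ P.ht a := by
    intro x hx
    rcases (SimpleGraph.Walk.mem_support_iff _).mp hx with h | h
    · subst h; exact le_refl _
    · have : x ∈ c.support.tail :=
        (List.Perm.mem_iff ((SimpleGraph.Walk.support_rotate c a ha).perm)).mp h
      exact hmax x (List.mem_toFinset.mpr (List.mem_of_mem_tail this))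
  obtain ⟨b, hab, q, hq⟩ := SimpleGraph.Walk.not_nil_iff.mp hd.not_nil
  have hqsup : ∀ x ∈ q.support, P.ht x ≤ P.ht a := by
    intro x hx
    refine hdsup x ?_
    rw [hq]
    exact (SimpleGraph.Walk.mem_support_iff _).mpr (Or.inr (by simpa using hx))
  -- first neighbor is the parent of a
  have hb : b = P.p a := by
    rcases hab.2 with h | h
    · exact h.symm
    · exfalso
      have hbr : b ≠ P.r := by
        intro hbr
        rw [hbr, P.root_fix] at h
        exact hab.ne (h.symm.trans hbr.symm)
      have hlt := P.ht_lt b hbr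
      rw [h] at hlt
      exact absurd (hqsup b q.start_mem_support) (not_le_of_gt hlt)
  -- decompose q from the rear
  have hqnil : ¬ q.Nil := SimpleGraph.Walk.not_nil_of_ne hab.ne.symm
  have hqrnil : ¬ q.reverse.Nil := SimpleGraph.Walk.not_nil_of_ne hab.ne
  obtain ⟨w, haw, q'', hqr⟩ := SimpleGraph.Walk.not_nil_iff.mp hqrnil
  have hqeq : q = q''.reverse.concat haw.symm := by
    have := congrArg SimpleGraph.Walk.reverse hqr
    rw [SimpleGraph.Walk.reverse_reverse, SimpleGraph.Walk.reverse_cons] at this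
    exact this
  have hwsup : w ∈ q.support := by
    rw [hqeq, SimpleGraph.Walk.support_concat]
    exact List.mem_append.mpr (Or.inl q''.reverse.end_mem_support)
  -- last neighbor is also the parent of a
  have hw : w = P.p a := by
    rcases haw.2 with h | h
    · exact h.symm
    · exfalso
      have hwr : w ≠ P.r := by
        intro hwr
        rw [hwr, P.root_fix] at h
        exact haw.ne (h.symm.trans hwr.symm)
      have hlt := P.ht_lt w hwr
      rw [h] at hlt
      exact absurd (hqsup w hwsup) (not_le_of_gt hlt)
  have hwb : w = b := by rw [hw, hb]
  subst hwb
  -- q'' is a closed walk with nodup support, hence nil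
  have hqsupnodup : q.support.Nodup := by
    have := hd.2
    rw [hq] at this
    simpa using this
  have hnodup' : q''.reverse.support.Nodup := by
    rw [hqeq, SimpleGraph.Walk.support_concat] at hqsupnodup
    exact List.Nodup.of_append_left hqsupnodup
  have : q''.reverse = SimpleGraph.Walk.nil := by
    have hp : q''.reverse.IsPath := (SimpleGraph.Walk.isPath_def _).mpr hnodup'
    exact SimpleGraph.Walk.isPath_iff_eq_nil.mp hp
  have hqlen : q.length = 1 := by
    rw [hqeq, SimpleGraph.Walk.length_concat, this]
    rfl
  have : d.length = 2 := by rw [hq, SimpleGraph.Walk.length_cons, hqlen]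
  have h3 := hd.three_le_length
  omega

lemma isTree (P : PTree ι) : P.G.IsTree :=
  ⟨P.connected, P.acyclic⟩

end PTree

section ToPTree

variable {ι : Type} [Fintype ι] [DecidableEq ι]

lemma exists_ptree {T : SimpleGraph ι} (hT : T.IsTree) : ∃ P : PTree ι, P.G = T := by
  classical
  have hconn := hT.isConnected
  obtain ⟨r⟩ : Nonempty ι := hconn.nonempty
  have key : ∀ t : ι, ∃ u : ι, (t = r → u = t) ∧
      (t ≠ r → T.Adj t u ∧ T.dist u r < T.dist t r) := by
    intro t
    by_cases htr : t = r
    · exact ⟨t, fun _ => rfl, fun h => absurd htr h⟩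
    · obtain ⟨w, hw⟩ := (hconn t r).exists_walk_length_eq_dist
      have hpos : 0 < T.dist t r := hconn.pos_dist_of_ne htr
      have hwnil : ¬ w.Nil := by
        rw [SimpleGraph.Walk.nil_iff_length_eq]
        omega
      obtain ⟨u, hadj, q, hq⟩ := SimpleGraph.Walk.not_nil_iff.mp hwnil
      refine ⟨u, fun h => absurd h htr, fun _ => ⟨hadj, ?_⟩⟩
      have hlen : q.length + 1 = T.dist t r := by
        rw [← hw, hq, SimpleGraph.Walk.length_cons]
      have := SimpleGraph.dist_le q
      omega
  choose p hp1 hp2 using key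
  have hadj_of_p : ∀ a b, p a = b → a ≠ b → T.Adj a b := by
    intro a b h hne
    by_cases har : a = r
    · exact absurd (by rw [← h, hp1 a har]) hne
    · exact h ▸ (hp2 a har).1
  refine ⟨⟨r, p, fun t => T.dist t r, hp1 r rfl, fun t ht => (hp2 t ht).2⟩, ?_⟩
  set P : PTree ι := ⟨r, p, fun t => T.dist t r, hp1 r rfl, fun t ht => (hp2 t ht).2⟩ with hP
  have hle : P.G ≤ T := by
    intro a b hab
    exact hab.2.elim (fun h => hadj_of_p _ _ h hab.1)
      (fun h => (hadj_of_p _ _ h hab.1.symm).symm)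
  haveI : Fintype P.G.edgeSet := Set.Finite.fintype (Set.toFinite _)
  haveI : Fintype T.edgeSet := Set.Finite.fintype (Set.toFinite _)
  have h1 := (PTree.isTree P).card_edgeFinset
  have h2 := hT.card_edgeFinset
  have hsub : P.G.edgeFinset ⊆ T.edgeFinset := SimpleGraph.edgeFinset_mono hle
  have heq : P.G.edgeFinset = T.edgeFinset :=
    Finset.eq_of_subset_of_card_le hsub (by omega)
  rwa [SimpleGraph.edgeFinset_inj] at heq

end ToPTree

section Decomp

variable {V : Type*}

/-- Generalization of `SupportAdj` to an arbitrary index type. -/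
def SAdjG {ι : Type} (T : SimpleGraph ι) (X : ι → Finset V) (S : Finset V) (t t' : ι) : Prop :=
  T.Adj t t' ∧ ∃ u ∈ S, u ∈ X t ∧ u ∈ X t'

/-- Generalization of `IsDDecomp` to an arbitrary index type. -/
def GoodDecomp (A : V → V → Prop) {ι : Type} (T : SimpleGraph ι) (X : ι → Finset V) : Prop :=
  T.IsTree ∧ ∀ S : Finset V, S.Nonempty → StronglyConnectedOn A S →
    (∃ t, ∃ u ∈ S, u ∈ X t) ∧
    ∀ t t', (∃ u ∈ S, u ∈ X t) → (∃ u ∈ S, u ∈ X t') →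
      Relation.ReflTransGen (SAdjG T X S) t t'

lemma sadjG_symm {ι : Type} {T : SimpleGraph ι} {X : ι → Finset V} {S : Finset V} {t t' : ι}
    (h : SAdjG T X S t t') : SAdjG T X S t' t :=
  ⟨h.1.symm, h.2.imp fun u hu => ⟨hu.1, hu.2.2, hu.2.1⟩⟩

lemma rtg_symm {α : Type*} {r : α → α → Prop} (hsymm : ∀ a b, r a b → r b a) {a b : α}
    (h : Relation.ReflTransGen r a b) : Relation.ReflTransGen r b a := by
  induction h with
  | refl => exact Relation.ReflTransGen.refl
  | tail hab hbc ih => exact Relation.ReflTransGen.head (hsymm _ _ hbc) ih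

lemma rtg_lift {α β : Type*} {r : α → α → Prop} {r' : β → β → Prop} (f : α → β)
    (hstep : ∀ a b, r a b → Relation.ReflTransGen r' (f a) (f b)) {a b : α}
    (h : Relation.ReflTransGen r a b) : Relation.ReflTransGen r' (f a) (f b) := by
  induction h with
  | refl => exact Relation.ReflTransGen.refl
  | tail _ hbc ih => exact ih.trans (hstep _ _ hbc)

lemma sadjG_mono {ι : Type} {T : SimpleGraph ι} {X X' : ι → Finset V} {S : Finset V}
    (hX : ∀ t, X t ⊆ X' t) {t t' : ι} (h : SAdjG T X S t t') : SAdjG T X' S t t' :=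
  ⟨h.1, h.2.imp fun u hu => ⟨hu.1, hX _ hu.2.1, hX _ hu.2.2⟩⟩

/-- Adding to a bag an element of a neighbouring bag preserves the decomposition property. -/
lemma pad_step {A : V → V → Prop} {ι : Type} [DecidableEq ι] {T : SimpleGraph ι}
    {X : ι → Finset V} (hgd : GoodDecomp A T X) {t₀ t₁ : ι} (hadj : T.Adj t₀ t₁) {u₀ : V}
    (hu₀ : u₀ ∈ X t₁) [DecidableEq V] :
    GoodDecomp A T (Function.update X t₀ (insert u₀ (X t₀))) := by
  set X' := Function.update X t₀ (insert u₀ (X t₀)) with hX'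
  have hXsub : ∀ t, X t ⊆ X' t := by
    intro t
    by_cases ht : t = t₀
    · subst ht; rw [hX', Function.update_self]; exact Finset.subset_insert _ _
    · rw [hX', Function.update_of_ne ht]
  have hX'eq : ∀ t, t ≠ t₀ → X' t = X t := fun t ht => Function.update_of_ne ht _ _
  have ht₀t₁ : t₀ ≠ t₁ := hadj.ne
  refine ⟨hgd.1, fun S hS hSC => ?_⟩
  obtain ⟨hex, hconn⟩ := hgd.2 S hS hSC
  constructor
  · obtain ⟨t, u, hu, hx⟩ := hex
    exact ⟨t, u, hu, hXsub t hx⟩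
  · -- endpoint reduction
    have reduce : ∀ t, (∃ u ∈ S, u ∈ X' t) →
        ∃ t₂, (∃ u ∈ S, u ∈ X t₂) ∧ Relation.ReflTransGen (SAdjG T X' S) t t₂ := by
      intro t ht
      by_cases htt₀ : t = t₀
      · subst htt₀
        obtain ⟨u, huS, hu⟩ := ht
        rw [hX', Function.update_self, Finset.mem_insert] at hu
        rcases hu with hu | hu
        · subst hu
          refine ⟨t₁, ⟨u, huS, hu₀⟩, Relation.ReflTransGen.single ?_⟩
          refine ⟨hadj, u, huS, ?_, ?_⟩
          · rw [hX', Function.update_self]; exact Finset.mem_insert_self _ _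
          · rw [hX', Function.update_of_ne ht₀t₁.symm]; exact hu₀
        · exact ⟨_, ⟨u, huS, hu⟩, Relation.ReflTransGen.refl⟩
      · rw [hX'eq t htt₀] at ht
        exact ⟨t, ht, Relation.ReflTransGen.refl⟩
    intro t t' ht ht'
    obtain ⟨t₂, hs₂, hp₂⟩ := reduce t ht
    obtain ⟨t₂', hs₂', hp₂'⟩ := reduce t' ht'
    have hmid : Relation.ReflTransGen (SAdjG T X' S) t₂ t₂' :=
      Relation.ReflTransGen.mono (fun a b h => sadjG_mono hXsub h) t₂ t₂' (hconn t₂ t₂' hs₂ hs₂')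
    exact (hp₂.trans hmid).trans (rtg_symm (fun _ _ h => sadjG_symm h) hp₂')

end Decomp

section Pad

variable {V : Type*} [DecidableEq V] {A : V → V → Prop}

lemma find_edge {ι : Type} {T : SimpleGraph ι} {X : ι → Finset V} {s : ℕ} :
    ∀ {t m : ι} (_ : T.Walk t m), (X t).card < s → (X m).card = s →
    ∃ a b, T.Adj a b ∧ (X a).card < s ∧ (X b \ X a).Nonempty := by
  intro t m w
  induction w with
  | nil => intro h1 h2; omega
  | @cons u x m hadj w ih =>
    intro h1 h2
    by_cases hne : (X x \ X u).Nonempty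
    · exact ⟨u, x, hadj, h1, hne⟩
    · have hsub : X x ⊆ X u := by
        rwa [Finset.nonempty_iff_ne_empty, ne_eq, not_not,
          Finset.sdiff_eq_empty_iff_subset] at hne
      exact ih (lt_of_le_of_lt (Finset.card_le_card hsub) h1) h2

lemma pad_all {ι : Type} [Fintype ι] [DecidableEq ι] {s : ℕ} :
    ∀ (k : ℕ) (T : SimpleGraph ι) (X : ι → Finset V), GoodDecomp A T X →
    (∀ t, (X t).card ≤ s) → (∃ m, (X m).card = s) →
    (∑ t, (s - (X t).card)) ≤ k →
    ∃ X' : ι → Finset V, GoodDecomp A T X' ∧ ∀ t, (X' t).card = s := by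
  intro k
  induction k with
  | zero =>
    intro T X hgd hle _ hsum
    refine ⟨X, hgd, fun t => ?_⟩
    have : s - (X t).card = 0 := by
      have := Finset.sum_eq_zero_iff.mp (Nat.le_zero.mp hsum) t (Finset.mem_univ t)
      exact this
    have := hle t
    omega
  | succ k ih =>
    intro T X hgd hle hmax hsum
    by_cases hall : ∀ t, (X t).card = s
    · exact ⟨X, hgd, hall⟩
    · push_neg at hall
      obtain ⟨t₀, ht₀⟩ := hall
      have ht₀lt : (X t₀).card < s := lt_of_le_of_ne (hle t₀) ht₀
      obtain ⟨m, hm⟩ := hmax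
      have hreach : T.Reachable t₀ m := hgd.1.isConnected t₀ m
      obtain ⟨w⟩ := hreach
      obtain ⟨a, b, hadj, hacard, ⟨u₀, hu₀⟩⟩ := find_edge w ht₀lt hm
      rw [Finset.mem_sdiff] at hu₀
      set X' := Function.update X a (insert u₀ (X a)) with hX'
      have hgd' : GoodDecomp A T X' := pad_step hgd hadj hu₀.1
      have hXa : X' a = insert u₀ (X a) := Function.update_self _ _ _
      have hXo : ∀ t, t ≠ a → X' t = X t := fun t ht => Function.update_of_ne ht _ _
      have hcard_a : (X' a).card = (X a).card + 1 := by
        rw [hXa, Finset.card_insert_of_notMem hu₀.2]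
      have hle' : ∀ t, (X' t).card ≤ s := by
        intro t
        by_cases ht : t = a
        · subst ht; omega
        · rw [hXo t ht]; exact hle t
      have ham : a ≠ m := fun h => by rw [h, hm] at hacard; omega
      have hmax' : ∃ m', (X' m').card = s := ⟨m, by rw [hXo m ham.symm]; exact hm⟩
      have hsum' : (∑ t, (s - (X' t).card)) < ∑ t, (s - (X t).card) := by
        have hpt : ∀ t ∈ Finset.univ, s - (X' t).card ≤ s - ((X t).card : ℕ) := by
          intro t _
          by_cases ht : t = a
          · rw [ht, hcard_a]; omega
          · rw [hXo t ht]
        have hstrict : s - (X' a).card < s - ((X a).card : ℕ) := by omega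
        exact Finset.sum_lt_sum hpt ⟨a, Finset.mem_univ a, hstrict⟩
      exact ih T X' hgd' hle' hmax' (by omega)

end Pad

section Contract

variable {V : Type*} [DecidableEq V] {A : V → V → Prop}
variable {ι : Type} [DecidableEq ι]

/-- Contract the edge from `t₀` to its parent. -/
def PTree.contract (P : PTree ι) (t₀ : ι) (h₀ : t₀ ≠ P.r) : PTree {t : ι // t ≠ t₀} where
  r := ⟨P.r, fun h => h₀ h.symm⟩
  p := fun t => if h : P.p t.1 = t₀ then ⟨P.p t₀, P.p_ne h₀⟩ else ⟨P.p t.1, h⟩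
  ht := fun t => P.ht t.1
  root_fix := by
    have : P.p P.r ≠ t₀ := by rw [P.root_fix]; exact fun h => h₀ h.symm
    simp only [dif_neg this]
    exact Subtype.ext P.root_fix
  ht_lt := by
    intro t ht
    have htr : t.1 ≠ P.r := fun h => ht (Subtype.ext h)
    by_cases h : P.p t.1 = t₀
    · simp only [dif_pos h]
      have h1 : P.ht (P.p t₀) < P.ht t₀ := P.ht_lt t₀ h₀
      have h2 : P.ht (P.p t.1) < P.ht t.1 := P.ht_lt t.1 htr
      rw [h] at h2
      exact lt_trans h1 h2
    · simp only [dif_neg h]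
      exact P.ht_lt t.1 htr

lemma contract_good (P : PTree ι) (X : ι → Finset V) (hgd : GoodDecomp A P.G X)
    {t₀ : ι} (h₀ : t₀ ≠ P.r) (hX : X t₀ = X (P.p t₀)) :
    GoodDecomp A (P.contract t₀ h₀).G (fun t => X t.1) := by
  classical
  set t₁ := P.p t₀ with ht₁
  have ht₁ne : t₁ ≠ t₀ := P.p_ne h₀
  set Q := P.contract t₀ h₀ with hQ
  have hp' : ∀ t : {t : ι // t ≠ t₀},
      Q.p t = if h : P.p t.1 = t₀ then ⟨t₁, ht₁ne⟩ else ⟨P.p t.1, h⟩ := fun _ => rfl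
  refine ⟨Q.isTree, fun S hS hSC => ?_⟩
  obtain ⟨hex, hconn⟩ := hgd.2 S hS hSC
  set π : ι → {t : ι // t ≠ t₀} := fun x => if hx : x = t₀ then ⟨t₁, ht₁ne⟩ else ⟨x, hx⟩ with hπ
  have hπne : ∀ x (h : x ≠ t₀), π x = ⟨x, h⟩ := fun x h => dif_neg h
  have hπt0 : π t₀ = ⟨t₁, ht₁ne⟩ := dif_pos rfl
  constructor
  · obtain ⟨t, u, huS, hu⟩ := hex
    by_cases ht : t = t₀
    · subst ht
      refine ⟨⟨t₁, ht₁ne⟩, u, huS, ?_⟩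
      show u ∈ X t₁
      rw [← hX]
      exact hu
    · exact ⟨⟨t, ht⟩, u, huS, hu⟩
  · have step : ∀ x y, SAdjG P.G X S x y →
        Relation.ReflTransGen (SAdjG Q.G (fun t => X t.1) S) (π x) (π y) := by
      intro x y hs
      obtain ⟨hadj, u, huS, hux, huy⟩ := hs
      by_cases hx : x = t₀ <;> by_cases hy : y = t₀
      · exact absurd (hx.trans hy.symm) hadj.ne
      · -- x = t₀, y ≠ t₀
        subst hx
        by_cases hyt₁ : y = t₁
        · rw [hπt0, hπne y hy]
          have heq : (⟨y, hy⟩ : {t : ι // t ≠ x}) = ⟨t₁, ht₁ne⟩ := Subtype.ext hyt₁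
          rw [heq]
        · have hpy : P.p y = x := by
            rcases hadj.2 with h | h
            · exact absurd (by rw [ht₁]; exact h.symm) hyt₁
            · exact h
          rw [hπt0, hπne y hy]
          refine Relation.ReflTransGen.single
            ⟨⟨fun hc => hyt₁ (congrArg Subtype.val hc).symm, Or.inr ?_⟩, u, huS, ?_, huy⟩
          · rw [hp']
            exact dif_pos hpy
          · show u ∈ X t₁
            rw [← hX]
            exact hux
      · -- y = t₀, x ≠ t₀
        subst hy
        by_cases hxt₁ : x = t₁
        · rw [hπt0, hπne x hx]
          have heq : (⟨x, hx⟩ : {t : ι // t ≠ y}) = ⟨t₁, ht₁ne⟩ := Subtype.ext hxt₁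
          rw [heq]
        · have hpx : P.p x = y := by
            rcases hadj.2 with h | h
            · exact h
            · exact absurd (by rw [ht₁]; exact h.symm) hxt₁
          rw [hπt0, hπne x hx]
          refine Relation.ReflTransGen.single
            ⟨⟨fun hc => hxt₁ (congrArg Subtype.val hc), Or.inl ?_⟩, u, huS, hux, ?_⟩
          · rw [hp']
            exact dif_pos hpx
          · show u ∈ X t₁
            rw [← hX]
            exact huy
      · -- neither
        rw [hπne x hx, hπne y hy]
        refine Relation.ReflTransGen.single
          ⟨⟨fun hc => hadj.ne (congrArg Subtype.val hc), ?_⟩, u, huS, hux, huy⟩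
        rcases hadj.2 with h | h
        · left
          rw [hp']
          have hne : P.p x ≠ t₀ := by rw [h]; exact hy
          rw [dif_neg hne]
          exact Subtype.ext h
        · right
          rw [hp']
          have hne : P.p y ≠ t₀ := by rw [h]; exact hx
          rw [dif_neg hne]
          exact Subtype.ext h
    intro t t' ht ht'
    have hpath := hconn t.1 t'.1 ht ht'
    have hlift := rtg_lift π step hpath
    rwa [hπne t.1 t.2, hπne t'.1 t'.2, Subtype.coe_eta, Subtype.coe_eta] at hlift

end Contract

section Subdiv

variable {V : Type*} [DecidableEq V] {A : V → V → Prop}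
variable {ι : Type} [DecidableEq ι]

/-- Subdivide the edge from `t₀` to its parent, inserting a new node `none`. -/
def PTree.subdiv (P : PTree ι) (t₀ : ι) (h₀ : t₀ ≠ P.r) : PTree (Option ι) where
  r := some P.r
  p := fun o => match o with
    | none => some (P.p t₀)
    | some t => if t = t₀ then none else some (P.p t)
  ht := fun o => match o with
    | none => 2 * P.ht t₀ - 1
    | some t => 2 * P.ht t
  root_fix := by
    have : P.r ≠ t₀ := fun h => h₀ h.symm
    simp only [if_neg this, P.root_fix]
  ht_lt := by
    intro o ho
    have h1 : P.ht (P.p t₀) < P.ht t₀ := P.ht_lt t₀ h₀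
    match o with
    | none =>
      show 2 * P.ht (P.p t₀) < 2 * P.ht t₀ - 1
      omega
    | some t =>
      have htr : t ≠ P.r := fun h => ho (by rw [h])
      by_cases ht : t = t₀
      · subst ht
        simp only [if_pos rfl]
        show 2 * P.ht t - 1 < 2 * P.ht t
        omega
      · simp only [if_neg ht]
        have := P.ht_lt t htr
        show 2 * P.ht (P.p t) < 2 * P.ht t
        omega

lemma subdiv_good (P : PTree ι) (X : ι → Finset V) (hgd : GoodDecomp A P.G X)
    {t₀ : ι} (h₀ : t₀ ≠ P.r) {a b : V}
    (ha : a ∈ X t₀ \ X (P.p t₀)) (hb : b ∈ X (P.p t₀) \ X t₀) :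
    GoodDecomp A (P.subdiv t₀ h₀).G
      (fun o => o.elim (insert b ((X t₀).erase a)) X) := by
  classical
  set t₁ := P.p t₀ with ht₁def
  set Y : Finset V := insert b ((X t₀).erase a) with hY
  set Q := P.subdiv t₀ h₀ with hQdef
  set X' : Option ι → Finset V := fun o => o.elim Y X with hX'
  have hX's : ∀ t : ι, X' (some t) = X t := fun _ => rfl
  have hX'n : X' none = Y := rfl
  rw [Finset.mem_sdiff] at ha hb
  have hp_some : ∀ t : ι, Q.p (some t) = if t = t₀ then none else some (P.p t) := fun _ => rfl
  have hp_none : Q.p none = some t₁ := rfl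
  have ht₀t₁ : t₀ ≠ t₁ := fun h => P.p_ne h₀ h.symm
  -- basic adjacencies
  have hadj_n0 : Q.G.Adj none (some t₀) := by
    refine ⟨fun h => (nomatch h), Or.inr ?_⟩
    rw [hp_some, if_pos rfl]
  have hadj_n1 : Q.G.Adj none (some t₁) := ⟨fun h => (nomatch h), Or.inl hp_none⟩
  refine ⟨Q.isTree, fun S hS hSC => ?_⟩
  obtain ⟨hex, hconn⟩ := hgd.2 S hS hSC
  constructor
  · obtain ⟨t, u, huS, hu⟩ := hex
    exact ⟨some t, u, huS, hu⟩
  · -- step mapping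
    have step : ∀ x y, SAdjG P.G X S x y →
        Relation.ReflTransGen (SAdjG Q.G X' S) (some x) (some y) := by
      intro x y hs
      obtain ⟨hadj, u, huS, hux, huy⟩ := hs
      have hcross : ∀ u', u' ∈ S → u' ∈ X t₀ → u' ∈ X t₁ →
          Relation.ReflTransGen (SAdjG Q.G X' S) (some t₀) (some t₁) := by
        intro u' hu'S h0 h1
        have hu'Y : u' ∈ Y := by
          rw [hY]
          exact Finset.mem_insert_of_mem (Finset.mem_erase.mpr ⟨fun h => ha.2 (h ▸ h1), h0⟩)
        refine Relation.ReflTransGen.head ⟨hadj_n0.symm, u', hu'S, h0, hu'Y⟩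
          (Relation.ReflTransGen.single ⟨hadj_n1, u', hu'S, hu'Y, h1⟩)
      rcases hadj.2 with h | h
      · by_cases hx : x = t₀
        · -- x = t₀, y = t₁
          subst hx
          have hy : y = t₁ := by rw [ht₁def, ← h]
          subst hy
          exact hcross u huS hux huy
        · refine Relation.ReflTransGen.single ⟨⟨fun hc => hadj.ne (Option.some.inj hc), Or.inl ?_⟩,
            u, huS, hux, huy⟩
          rw [hp_some, if_neg hx, h]
      · by_cases hy : y = t₀
        · subst hy
          have hx : x = t₁ := by rw [ht₁def, ← h]
          subst hx
          exact rtg_symm (fun _ _ hh => sadjG_symm hh) (hcross u huS huy hux)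
        · refine Relation.ReflTransGen.single ⟨⟨fun hc => hadj.ne (Option.some.inj hc), Or.inr ?_⟩,
            u, huS, hux, huy⟩
          rw [hp_some, if_neg hy, h]
    -- endpoint reduction
    have reduce : ∀ o, (∃ u ∈ S, u ∈ X' o) →
        ∃ x, (∃ u ∈ S, u ∈ X x) ∧ Relation.ReflTransGen (SAdjG Q.G X' S) o (some x) := by
      intro o ho
      match o with
      | some x => exact ⟨x, ho, Relation.ReflTransGen.refl⟩
      | none =>
        obtain ⟨u, huS, hu⟩ := ho
        rw [hX'n, hY, Finset.mem_insert] at hu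
        rcases hu with hu | hu
        · subst hu
          refine ⟨t₁, ⟨u, huS, hb.1⟩, Relation.ReflTransGen.single
            ⟨hadj_n1, u, huS, ?_, hb.1⟩⟩
          rw [hX'n, hY]
          exact Finset.mem_insert_self _ _
        · have hu0 : u ∈ X t₀ := (Finset.mem_erase.mp hu).2
          refine ⟨t₀, ⟨u, huS, hu0⟩, Relation.ReflTransGen.single
            ⟨hadj_n0, u, huS, ?_, hu0⟩⟩
          rw [hX'n, hY]
          exact Finset.mem_insert_of_mem hu
    intro o o' ho ho'
    obtain ⟨x, hsx, hpx⟩ := reduce o ho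
    obtain ⟨x', hsx', hpx'⟩ := reduce o' ho'
    have hmid := rtg_lift some step (hconn x x' hsx hsx')
    exact (hpx.trans hmid).trans (rtg_symm (fun _ _ hh => sadjG_symm hh) hpx')

end Subdiv

section FixAll

variable {V : Type*} [DecidableEq V] {A : V → V → Prop}

lemma fix_all (s : ℕ) :
    ∀ (k : ℕ) (ι : Type) (_ : Fintype ι) (_ : DecidableEq ι) (P : PTree ι) (X : ι → Finset V),
    GoodDecomp A P.G X → (∀ t, (X t).card = s) →
    2 * (∑ t, ((X t \ X (P.p t)).card - 1)) + Fintype.card ι ≤ k →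
    ∃ (ι' : Type) (_ : Fintype ι') (_ : DecidableEq ι') (P' : PTree ι') (X' : ι' → Finset V),
      GoodDecomp A P'.G X' ∧ (∀ t, (X' t).card = s) ∧
      ∀ t, t ≠ P'.r → (X' t \ X' (P'.p t)).card = 1 := by
  intro k
  induction k with
  | zero =>
    intro ι hfin hdec P X _ _ hk
    have hpos := @Fintype.card_pos ι hfin ⟨P.r⟩
    omega
  | succ k ih =>
    intro ι hfin hdec P X hgd hcard hk
    letI := hfin; letI := hdec
    by_cases hterm : ∀ t, t ≠ P.r → (X t \ X (P.p t)).card = 1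
    · exact ⟨ι, hfin, hdec, P, X, hgd, hcard, hterm⟩
    push_neg at hterm
    obtain ⟨t₀, ht₀r, hq⟩ := hterm
    set f : ι → ℕ := fun t => (X t \ X (P.p t)).card - 1 with hf
    set q : ℕ := (X t₀ \ X (P.p t₀)).card with hqdef
    rcases Nat.lt_or_ge q 2 with hq2 | hq2
    · -- q = 0 : contract
      have hq0 : q = 0 := by omega
      have hsub : X t₀ ⊆ X (P.p t₀) := by
        rw [← Finset.sdiff_eq_empty_iff_subset]
        exact Finset.card_eq_zero.mp hq0
      have hXeq : X t₀ = X (P.p t₀) :=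
        Finset.eq_of_subset_of_card_le hsub (by rw [hcard, hcard])
      set Q := P.contract t₀ ht₀r with hQ
      set X' : {t : ι // t ≠ t₀} → Finset V := fun t => X t.1 with hX'
      have hgd' : GoodDecomp A Q.G X' := contract_good P X hgd ht₀r hXeq
      have hcard' : ∀ t, (X' t).card = s := fun t => hcard t.1
      have hpt : ∀ t' : {t : ι // t ≠ t₀},
          (X' t' \ X' (Q.p t')).card = (X t'.1 \ X (P.p t'.1)).card := by
        intro t'
        show (X t'.1 \ X (Q.p t').1).card = _
        have : Q.p t' = if h : P.p t'.1 = t₀ then ⟨P.p t₀, P.p_ne ht₀r⟩ else ⟨P.p t'.1, h⟩ := rfl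
        rw [this]
        by_cases h : P.p t'.1 = t₀
        · rw [dif_pos h, h]
          show (X t'.1 \ X (P.p t₀)).card = _
          rw [← hXeq]
        · rw [dif_neg h]
      have hsum' : (∑ t' : {t : ι // t ≠ t₀}, ((X' t' \ X' (Q.p t')).card - 1))
          ≤ Finset.univ.sum f := by
        calc (∑ t' : {t : ι // t ≠ t₀}, ((X' t' \ X' (Q.p t')).card - 1))
            = ∑ t' : {t : ι // t ≠ t₀}, f t'.1 :=
              Finset.sum_congr rfl (fun t' _ => by rw [hf]; rw [hpt t'])
          _ = ∑ t ∈ Finset.univ.erase t₀, f t :=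
              (Finset.sum_subtype _ (fun x => by simp [Finset.mem_erase]) f).symm
          _ ≤ Finset.univ.sum f := Finset.sum_le_sum_of_subset (Finset.subset_univ _)
      have hk' : 2 * Finset.univ.sum f + Fintype.card ι ≤ k + 1 := hk
      have hcardlt : Fintype.card {t : ι // t ≠ t₀} < Fintype.card ι :=
        Fintype.card_lt_of_injective_of_notMem Subtype.val Subtype.val_injective
          (by rintro ⟨t', ht'⟩; exact t'.2 ht')
      exact ih _ inferInstance inferInstance Q X' hgd' hcard' (by omega)
    · -- q ≥ 2 : subdivide
      set t₁ := P.p t₀ with ht₁def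
      obtain ⟨a, haa⟩ : (X t₀ \ X t₁).Nonempty := Finset.card_pos.mp (by omega)
      have hsd : (X t₁ \ X t₀).card = q := by
        have c1 := Finset.card_sdiff_add_card_inter (X t₀) (X t₁)
        have c2 := Finset.card_sdiff_add_card_inter (X t₁) (X t₀)
        rw [Finset.inter_comm] at c2
        rw [hcard t₀] at c1
        rw [hcard t₁] at c2
        omega
      obtain ⟨b, hbb⟩ : (X t₁ \ X t₀).Nonempty := Finset.card_pos.mp (by omega)
      set Q := P.subdiv t₀ ht₀r with hQ
      set Y : Finset V := insert b ((X t₀).erase a) with hY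
      set X' : Option ι → Finset V := fun o => o.elim Y X with hX'
      have hgd' : GoodDecomp A Q.G X' := subdiv_good P X hgd ht₀r haa hbb
      rw [Finset.mem_sdiff] at haa hbb
      have hsle : q ≤ s := by
        rw [hqdef, ← hcard t₀]
        exact Finset.card_le_card (Finset.sdiff_subset)
      have hYcard : Y.card = s := by
        rw [hY, Finset.card_insert_of_notMem
          (fun h => hbb.2 (Finset.mem_erase.mp h).2), Finset.card_erase_of_mem haa.1, hcard t₀]
        omega
      have hcard' : ∀ o, (X' o).card = s := by
        intro o
        match o with
        | none => exact hYcard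
        | some t => exact hcard t
      -- sum bookkeeping
      have hps : ∀ t : ι, t ≠ t₀ → Q.p (some t) = some (P.p t) := by
        intro t ht
        show (if t = t₀ then none else some (P.p t)) = some (P.p t)
        rw [if_neg ht]
      have hi : ∀ t : ι, t ≠ t₀ → (X' (some t) \ X' (Q.p (some t))).card - 1 = f t := by
        intro t ht
        rw [hps t ht]
        rfl
      have hii : X' (some t₀) \ X' (Q.p (some t₀)) = {a} := by
        have : Q.p (some t₀) = none := by
          show (if t₀ = t₀ then none else some (P.p t₀)) = none
          rw [if_pos rfl]
        rw [this]
        show X t₀ \ Y = {a}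
        ext u
        simp only [hY, Finset.mem_sdiff, Finset.mem_insert, Finset.mem_erase,
          Finset.mem_singleton]
        constructor
        · rintro ⟨hu0, hu⟩
          push_neg at hu
          by_contra hua
          exact (hu.2 hua) hu0
        · rintro rfl
          refine ⟨haa.1, ?_⟩
          push_neg
          exact ⟨fun h => hbb.2 (h ▸ haa.1), fun h => absurd rfl h⟩
      have hiii : X' none \ X' (Q.p none) = (X t₀ \ X t₁).erase a := by
        show Y \ X t₁ = (X t₀ \ X t₁).erase a
        ext u
        simp only [hY, Finset.mem_sdiff, Finset.mem_insert, Finset.mem_erase]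
        constructor
        · rintro ⟨hu1 | ⟨hua, hu0⟩, hu2⟩
          · exact absurd (by rw [hu1]; exact hbb.1) hu2
          · exact ⟨hua, hu0, hu2⟩
        · rintro ⟨hua, hu0, hu2⟩
          exact ⟨Or.inr ⟨hua, hu0⟩, hu2⟩
      have hiii' : (X' none \ X' (Q.p none)).card = q - 1 := by
        rw [hiii, Finset.card_erase_of_mem (Finset.mem_sdiff.mpr ⟨haa.1, haa.2⟩), hqdef]
      set f' : Option ι → ℕ := fun o => (X' o \ X' (Q.p o)).card - 1 with hf'
      have hsum_opt : ∑ o : Option ι, f' o = f' none + ∑ t : ι, f' (some t) :=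
        Fintype.sum_option f'
      have hsplit : ∑ t ∈ Finset.univ.erase t₀, f' (some t) + f' (some t₀) = ∑ t : ι, f' (some t) :=
        Finset.sum_erase_add _ _ (Finset.mem_univ t₀)
      have hcongr : ∑ t ∈ Finset.univ.erase t₀, f' (some t) = ∑ t ∈ Finset.univ.erase t₀, f t :=
        Finset.sum_congr rfl (fun t ht => hi t (Finset.mem_erase.mp ht).1)
      have hfull : ∑ t ∈ Finset.univ.erase t₀, f t + f t₀ = Finset.univ.sum f :=
        Finset.sum_erase_add _ _ (Finset.mem_univ t₀)
      have hk' : 2 * Finset.univ.sum f + Fintype.card ι ≤ k + 1 := hk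
      have hft₀ : f t₀ = q - 1 := rfl
      have hf't₀ : f' (some t₀) = 0 := by
        show (X' (some t₀) \ X' (Q.p (some t₀))).card - 1 = 0
        rw [hii, Finset.card_singleton]
      have hf'none : f' none = q - 1 - 1 := by
        show (X' none \ X' (Q.p none)).card - 1 = q - 1 - 1
        rw [hiii']
      have hcardopt : Fintype.card (Option ι) = Fintype.card ι + 1 := Fintype.card_option
      refine ih _ inferInstance inferInstance Q X' hgd' hcard' ?_
      rw [hcardopt, hsum_opt, ← hsplit, hcongr, hf't₀, hf'none]
      omega
end FixAll


section Transport

/-- Transport of a terminal decomposition to `Fin n`. -/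
noncomputable def PTree.toFin {ι : Type} [Fintype ι] (P : PTree ι) : PTree (Fin (Fintype.card ι)) where
  r := (Fintype.equivFin ι) P.r
  p := fun i => (Fintype.equivFin ι) (P.p ((Fintype.equivFin ι).symm i))
  ht := fun i => P.ht ((Fintype.equivFin ι).symm i)
  root_fix := by simp [P.root_fix]
  ht_lt := by
    intro i hi
    have hne : (Fintype.equivFin ι).symm i ≠ P.r := by
      intro h
      exact hi (by rw [← h, Equiv.apply_symm_apply])
    simpa using P.ht_lt _ hne


end Transport

theorem stmt15 [Fintype V] [DecidableEq V] (A : V → V → Prop) :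
    ∃ (n : ℕ) (T : SimpleGraph (Fin n)) (X : Fin n → Finset V),
      IsDDecomp A T X ∧ ddWidth X = dWidth A ∧
      ∀ t t', T.Adj t t' → (X t \ X t').card = 1 ∧ (X t' \ X t).card = 1 := by
  classical
  -- the trivial decomposition shows the defining set of `dWidth` is non-empty
  have htriv : IsDDecomp A (⊥ : SimpleGraph (Fin 1)) (fun _ => (Finset.univ : Finset V)) := by
    refine ⟨⟨⟨fun a b => by rw [Subsingleton.elim a b]⟩, fun v c hc => hc.ne_bot rfl⟩,
      fun S hS _ => ?_⟩
    obtain ⟨u, hu⟩ := hS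
    refine ⟨⟨0, u, hu, Finset.mem_univ u⟩, fun t t' _ _ => ?_⟩
    rw [Subsingleton.elim t t']
  have hmem : dWidth A ∈ { w | ∃ (n : ℕ) (T : SimpleGraph (Fin n)) (X : Fin n → Finset V),
      IsDDecomp A T X ∧ ddWidth X = w } :=
    Nat.sInf_mem ⟨_, 1, ⊥, fun _ => (Finset.univ : Finset V), htriv, rfl⟩
  obtain ⟨n₀, T₀, X₀, hdd₀, hw₀⟩ := hmem
  have hg₀ : GoodDecomp A T₀ X₀ := ⟨hdd₀.1, hdd₀.2⟩
  obtain ⟨P₀, hP₀⟩ := exists_ptree hdd₀.1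
  have hg₀' : GoodDecomp A P₀.G X₀ := by rw [hP₀]; exact hg₀
  set s : ℕ := Finset.univ.sup (fun t => (X₀ t).card) with hs
  haveI : Nonempty (Fin n₀) := hdd₀.1.isConnected.nonempty
  obtain ⟨m, _, hms⟩ := Finset.exists_mem_eq_sup (Finset.univ : Finset (Fin n₀))
    Finset.univ_nonempty (fun t => (X₀ t).card)
  obtain ⟨X₁, hg₁, hc₁⟩ := pad_all (A := A) (s := s) _ P₀.G X₀ hg₀'
    (fun t => by rw [hs]; exact Finset.le_sup (f := fun t => (X₀ t).card) (Finset.mem_univ t))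
    ⟨m, hms.symm⟩ le_rfl
  obtain ⟨ι', hfin', hdec', P', X', hgd', hcard', hterm'⟩ := fix_all (A := A) s _
    (Fin n₀) inferInstance inferInstance P₀ X₁ hg₁ hc₁ le_rfl
  letI := hfin'; letI := hdec'
  -- transport to `Fin n`
  set n := Fintype.card ι' with hn
  set e := Fintype.equivFin ι' with he
  set Pf := P'.toFin with hPf
  set Xf : Fin n → Finset V := fun i => X' (e.symm i) with hXf
  have hPfp : ∀ i, Pf.p i = e (P'.p (e.symm i)) := fun _ => rfl
  have hPfr : Pf.r = e P'.r := rfl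
  -- transported decomposition property
  have hgdf : GoodDecomp A Pf.G Xf := by
    refine ⟨Pf.isTree, fun S hS hSC => ?_⟩
    obtain ⟨hex, hconn⟩ := hgd'.2 S hS hSC
    constructor
    · obtain ⟨t, u, huS, hu⟩ := hex
      refine ⟨e t, u, huS, ?_⟩
      show u ∈ X' (e.symm (e t))
      rw [Equiv.symm_apply_apply]
      exact hu
    · have step : ∀ x y, SAdjG P'.G X' S x y →
          Relation.ReflTransGen (SAdjG Pf.G Xf S) (e x) (e y) := by
        intro x y hs'
        obtain ⟨hadj, u, huS, hux, huy⟩ := hs'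
        refine Relation.ReflTransGen.single
          ⟨⟨fun hc => hadj.ne (e.injective hc), ?_⟩, u, huS, ?_, ?_⟩
        · rcases hadj.2 with h | h
          · left
            rw [hPfp, Equiv.symm_apply_apply, h]
          · right
            rw [hPfp, Equiv.symm_apply_apply, h]
        · show u ∈ X' (e.symm (e x))
          rw [Equiv.symm_apply_apply]; exact hux
        · show u ∈ X' (e.symm (e y))
          rw [Equiv.symm_apply_apply]; exact huy
      intro i j hi hj
      have hpath := hconn (e.symm i) (e.symm j) hi hj
      have hlift := rtg_lift e step hpath
      rwa [Equiv.apply_symm_apply, Equiv.apply_symm_apply] at hlift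
  have hcardf : ∀ i, (Xf i).card = s := fun i => hcard' (e.symm i)
  have hvalf : ∀ i, i ≠ Pf.r → (Xf i \ Xf (Pf.p i)).card = 1 := by
    intro i hi
    have hne : e.symm i ≠ P'.r := by
      intro h
      exact hi (by rw [hPfr, ← h, Equiv.apply_symm_apply])
    have := hterm' (e.symm i) hne
    show (X' (e.symm i) \ X' (e.symm (Pf.p i))).card = 1
    rw [hPfp, Equiv.symm_apply_apply]
    exact this
  -- assemble
  refine ⟨n, Pf.G, Xf, ⟨hgdf.1, hgdf.2⟩, ?_, ?_⟩
  · -- width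
    have hsup : (Finset.univ.sup fun i => (Xf i).card) = s := by
      apply le_antisymm
      · exact Finset.sup_le (fun i _ => le_of_eq (hcardf i))
      · rw [← hcardf (e P'.r)]
        exact Finset.le_sup (f := fun i => (Xf i).card) (Finset.mem_univ _)
    show (Finset.univ.sup fun i => (Xf i).card) - 1 = dWidth A
    rw [hsup, ← hw₀]
    show s - 1 = (Finset.univ.sup fun t => (X₀ t).card) - 1
    rw [hs]
  · -- validity of every edge
    have key : ∀ i j : Fin n, Pf.p i = j → i ≠ j →
        (Xf i \ Xf j).card = 1 ∧ (Xf j \ Xf i).card = 1 := by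
      intro i j hpij hne
      have hir : i ≠ Pf.r := by
        intro h
        apply hne
        rw [← hpij, h, Pf.root_fix]
      have h1 : (Xf i \ Xf j).card = 1 := by
        rw [← hpij]
        exact hvalf i hir
      refine ⟨h1, ?_⟩
      have c1 := Finset.card_sdiff_add_card_inter (Xf i) (Xf j)
      have c2 := Finset.card_sdiff_add_card_inter (Xf j) (Xf i)
      rw [Finset.inter_comm] at c2
      rw [hcardf i] at c1
      rw [hcardf j] at c2
      omega
    intro t t' hadj
    rcases hadj.2 with h | h
    · exact key t t' h hadj.ne
    · exact And.symm (key t' t h hadj.ne.symm)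
end

section
/- Let D be a digraph with a 𝒟-decomposition (T, X), let α be a dicolouring of D, let x be a vertex of D, and let c be a colour such that α(v) ≠ c for every vertex v belonging to some bag containing x. Then the colouring obtained from α by recolouring x with c is again a dicolouring of D. -/
variable {V : Type*}

section Aux
variable {V : Type*}

lemma chain'_mono_mem {R S : V → V → Prop} :
    ∀ l : List V, (∀ a ∈ l, ∀ b ∈ l, R a b → S a b) → l.Chain' R → l.Chain' S
  | [], _, _ => List.isChain_nil
  | [_], _, _ => List.isChain_singleton _
  | a :: b :: t, h, hch => by
    unfold List.Chain' at hch ⊢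
    rw [List.isChain_cons_cons] at hch ⊢
    exact ⟨h a (by simp) b (by simp) hch.1,
      chain'_mono_mem (b :: t) (fun u hu v hv => h u (by simp [hu]) v (by simp [hv])) hch.2⟩

lemma chainHead {R : V → V → Prop} :
    ∀ (tl : List V) (hd : V), List.Chain' R (hd :: tl) →
      ∀ a ∈ hd :: tl, Relation.ReflTransGen R hd a
  | [], _, _, a, ha => by
    simp only [List.mem_singleton] at ha; subst ha; exact .refl
  | b :: tl, hd, h, a, ha => by
    rcases List.mem_cons.1 ha with rfl | ha
    · exact .refl
    · exact Relation.ReflTransGen.head (List.isChain_cons_cons.1 h).1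
        (chainHead tl b (List.isChain_cons_cons.1 h).2 a ha)

lemma chainLast {R : V → V → Prop} :
    ∀ (tl : List V) (hd : V), List.Chain' R (hd :: tl) →
      ∀ a ∈ hd :: tl, Relation.ReflTransGen R a ((hd :: tl).getLast (by simp))
  | [], _, _, a, ha => by
    simp only [List.mem_singleton] at ha; subst ha; exact .refl
  | b :: tl, hd, h, a, ha => by
    have hlast : (hd :: b :: tl).getLast (by simp) = (b :: tl).getLast (by simp) :=
      List.getLast_cons (by simp)
    rw [hlast]
    rcases List.mem_cons.1 ha with rfl | ha
    · exact Relation.ReflTransGen.head (List.isChain_cons_cons.1 h).1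
        (chainLast tl b (List.isChain_cons_cons.1 h).2 b (by simp))
    · exact chainLast tl b (List.isChain_cons_cons.1 h).2 a ha

lemma existsSucc {S : V → V → Prop} :
    ∀ l : List V, l.Chain' S → ∀ v ∈ l, l.getLast? = some v ∨ ∃ w ∈ l, S v w
  | [], _, v, hv => absurd hv (by simp)
  | [a], _, v, hv => by
    simp only [List.mem_singleton] at hv; subst hv; left; rfl
  | a :: b :: t, h, v, hv => by
    rcases List.mem_cons.1 hv with rfl | hv
    · exact Or.inr ⟨b, by simp, (List.isChain_cons_cons.1 h).1⟩
    · rcases existsSucc (b :: t) (List.isChain_cons_cons.1 h).2 v hv with h1 | ⟨w, hw, hsw⟩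
      · left; rw [List.getLast?_cons_cons]; exact h1
      · exact Or.inr ⟨w, by simp [hw], hsw⟩

lemma pathWitness {n : ℕ} {T : SimpleGraph (Fin n)} {X : Fin n → Finset V}
    {S : Finset V} {x : V} {a b : Fin n}
    (h : Relation.ReflTransGen (SupportAdj T X S) a b) (hxa : x ∉ X a) (hxb : x ∈ X b) :
    ∃ t, x ∈ X t ∧ ∃ u ∈ S, u ≠ x ∧ u ∈ X t := by
  revert hxb
  induction h with
  | refl => exact fun hxb => absurd hxb hxa
  | @tail b' b hab hbc ih =>
    intro hxb
    by_cases hb' : x ∈ X b'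
    · exact ih hb'
    · obtain ⟨-, u, huS, hu1, hu2⟩ := hbc
      exact ⟨b, hxb, u, huS, fun h => hb' (h ▸ hu1), hu2⟩

end Aux
theorem stmt17 [DecidableEq V] (A : V → V → Prop) {n : ℕ}
    (T : SimpleGraph (Fin n)) (X : Fin n → Finset V) (hdec : IsDDecomp A T X)
    {C : Type*} (α : V → C) (hα : IsDicolouring A α) (x : V) (c : C)
    (hc : ∀ t, x ∈ X t → ∀ v ∈ X t, α v ≠ c) :
    IsDicolouring A (Function.update α x c) := by
  set φ := Function.update α x c with hφ
  intro c' ⟨l, hne, hnd, hch, hlh⟩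
  -- every vertex of l has colour c' under φ
  have hmono : ∀ v ∈ l, φ v = c' := by
    intro v hv
    rcases existsSucc l hch v hv with h1 | ⟨w, _, _, hvc, _⟩
    · exact (hlh v h1 (l.head hne) (List.head?_eq_head hne)).2.1
    · exact hvc
  by_cases hx : x ∈ l
  · -- x on the cycle: c' = c
    have hc' : c' = c := by
      have := hmono x hx
      rw [hφ, Function.update_self] at this; exact this.symm
    subst hc'
    rcases l with _ | ⟨a, t⟩
    · exact hne rfl
    rcases t with _ | ⟨b, t⟩
    · -- a loop, contradicts hα directly
      have hloop : A a a := (hlh a rfl a rfl).1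
      exact hα (α a) ⟨[a], by simp, by simp, List.isChain_singleton _, by simp [hloop]⟩
    · -- the cycle has ≥ 2 vertices; pick v on it, v ≠ x
      obtain ⟨v, hvl, hvx⟩ : ∃ v ∈ a :: b :: t, v ≠ x := by
        by_cases hax : a = x
        · refine ⟨b, by simp, fun h => (List.nodup_cons.1 hnd).1 ?_⟩
          rw [hax, ← h]; simp
        · exact ⟨a, by simp, hax⟩
      set S := (a :: b :: t).toFinset with hS
      have hmemS : ∀ u ∈ a :: b :: t, u ∈ S := fun u hu => List.mem_toFinset.2 hu
      have hchA : (a :: b :: t).Chain' A :=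
        chain'_mono_mem _ (fun u _ w _ h => h.1) hch
      have hch' : (a :: b :: t).Chain' (fun p q => A p q ∧ p ∈ S ∧ q ∈ S) :=
        chain'_mono_mem _ (fun u hu w hw h => ⟨h, hmemS u hu, hmemS w hw⟩) hchA
      have hwrap : A ((a :: b :: t).getLast (by simp)) a ∧
          (a :: b :: t).getLast (by simp) ∈ S ∧ a ∈ S := by
        have h1 := hlh ((a :: b :: t).getLast (by simp))
          (List.getLast?_eq_getLast (by simp)) a rfl
        exact ⟨h1.1, hmemS _ (List.getLast_mem (by simp)), hmemS a (by simp)⟩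
      have hSC : StronglyConnectedOn A S := by
        intro p hp q hq
        have hp' : p ∈ a :: b :: t := List.mem_toFinset.1 hp
        have hq' : q ∈ a :: b :: t := List.mem_toFinset.1 hq
        exact Relation.ReflTransGen.trans (chainLast (b :: t) a hch' p hp')
          (Relation.ReflTransGen.head hwrap (chainHead (b :: t) a hch' q hq'))
      have hSne : S.Nonempty := ⟨x, hmemS x hx⟩
      have singSC : ∀ w : V, StronglyConnectedOn A {w} := by
        intro w p hp q hq
        simp only [Finset.mem_singleton] at hp hq; subst hp; subst hq; exact .refl
      obtain ⟨⟨t0, u0, hu0, hu0X⟩, -⟩ := hdec.2 {x} ⟨x, by simp⟩ (singSC x)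
      simp only [Finset.mem_singleton] at hu0; rw [hu0] at hu0X
      obtain ⟨⟨t1, u1, hu1, hu1X⟩, -⟩ := hdec.2 {v} ⟨v, by simp⟩ (singSC v)
      simp only [Finset.mem_singleton] at hu1; rw [hu1] at hu1X
      obtain ⟨t2, hxt2, u, huS, hux, huX⟩ :
          ∃ t2, x ∈ X t2 ∧ ∃ u ∈ S, u ≠ x ∧ u ∈ X t2 := by
        by_cases hxt1 : x ∈ X t1
        · exact ⟨t1, hxt1, v, hmemS v hvl, hvx, hu1X⟩
        · obtain ⟨-, hconn⟩ := hdec.2 S hSne hSC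
          exact pathWitness (hconn t1 t0 ⟨v, hmemS v hvl, hu1X⟩ ⟨x, hmemS x hx, hu0X⟩)
            hxt1 hu0X
      have huc : α u = c' := by
        have h1 := hmono u (List.mem_toFinset.1 huS)
        rwa [hφ, Function.update_of_ne hux] at h1
      exact hc t2 hxt2 u huX huc
  · -- x not on the cycle: it is an α-monochromatic cycle
    have heq : ∀ u ∈ l, α u = c' := by
      intro u hu
      have hux : u ≠ x := by rintro rfl; exact hx hu
      have := hmono u hu
      rwa [hφ, Function.update_of_ne hux] at this
    refine hα c' ⟨l, hne, hnd, ?_, ?_⟩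
    · exact chain'_mono_mem l (fun u hu w hw h => ⟨h.1, heq u hu, heq w hw⟩) hch
    · intro p hp q hq
      exact ⟨(hlh p hp q hq).1, heq p (List.mem_of_mem_getLast? hp),
        heq q (List.mem_of_mem_head? hq)⟩
end
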